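/- Let H be a Hilbert space, φ₁,…,φₙ unit vectors in H with stability constant θ(φ₁,…,φₙ) := inf_{α≠0} ‖Σᵢ αᵢφᵢ‖² / Σᵢ ‖αᵢφᵢ‖² > 0. Let φ ∈ span{φ₁,…,φₙ} be a unit vector and V a closed subspace of H. Then dist(φ,V) ≤ sqrt(2n / θ(φ₁,…,φₙ)) · max_{1≤i≤n} dist(φᵢ,V). -/

import Mathlib

/-- stability-constant estimate for the distance of a unit vector in the
span of nearly-orthogonal unit vectors to a closed subspace. -/
theorem stmt_1 {H : Type*} [NormedAddCommGroup H] [InnerProductSpace ℝ H] [CompleteSpace H]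
    (n : ℕ) (hn : 0 < n) (φ : Fin n → H) (hunit : ∀ i, ‖φ i‖ = 1)
    (θ : ℝ)
    (hθ : θ = sInf {r : ℝ | ∃ α : Fin n → ℝ, α ≠ 0 ∧
      r = ‖∑ i, α i • φ i‖ ^ 2 / ∑ i, ‖α i • φ i‖ ^ 2})
    (hθpos : 0 < θ)
    (φ0 : H) (hφ0 : φ0 ∈ Submodule.span ℝ (Set.range φ)) (hφ0norm : ‖φ0‖ = 1)
    (V : Submodule ℝ H) (hV : IsClosed (V : Set H)) :
    Metric.infDist φ0 (V : Set H) ≤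
      Real.sqrt (2 * n / θ) * ⨆ i, Metric.infDist (φ i) (V : Set H) := by
  obtain ⟨α, hα⟩ := (Submodule.mem_span_range_iff_exists_fun ℝ).1 hφ0
  have hα0 : α ≠ 0 := by
    rintro rfl
    simp at hα
    rw [← hα] at hφ0norm
    simp at hφ0norm
  set S : ℝ := ∑ i, (α i) ^ 2 with hS
  have hSpos : 0 < S := by
    obtain ⟨i, hi⟩ := Function.ne_iff.1 hα0
    exact Finset.sum_pos' (fun j _ => sq_nonneg _)
      ⟨i, Finset.mem_univ i, (sq_nonneg _).lt_of_ne (Ne.symm (pow_ne_zero 2 hi))⟩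
  have hnormsum : ∑ i, ‖α i • φ i‖ ^ 2 = S := by
    simp [norm_smul, hunit, mul_pow, sq_abs, hS]
  -- θ ≤ 1 / S
  have hmem : (1 : ℝ) / S ∈ {r : ℝ | ∃ α : Fin n → ℝ, α ≠ 0 ∧
      r = ‖∑ i, α i • φ i‖ ^ 2 / ∑ i, ‖α i • φ i‖ ^ 2} := by
    refine ⟨α, hα0, ?_⟩
    rw [hα, hnormsum, hφ0norm, one_pow]
  have hbdd : BddBelow {r : ℝ | ∃ α : Fin n → ℝ, α ≠ 0 ∧
      r = ‖∑ i, α i • φ i‖ ^ 2 / ∑ i, ‖α i • φ i‖ ^ 2} := by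
    refine ⟨0, fun r hr => ?_⟩
    obtain ⟨β, -, rfl⟩ := hr
    positivity
  have hθle : θ ≤ 1 / S := hθ ▸ csInf_le hbdd hmem
  have hSle : S ≤ 1 / θ := by
    rw [le_div_iff₀ hθpos]
    nlinarith [mul_le_mul_of_nonneg_right hθle hSpos.le, one_div_mul_cancel hSpos.ne']
  set M : ℝ := ⨆ i, Metric.infDist (φ i) (V : Set H) with hM
  have hVne : (V : Set H).Nonempty := ⟨0, V.zero_mem⟩
  have hMbdd : BddAbove (Set.range fun i => Metric.infDist (φ i) (V : Set H)) :=
    Set.Finite.bddAbove (Set.finite_range _)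
  have hMnn : 0 ≤ M := by
    haveI : Nonempty (Fin n) := ⟨⟨0, hn⟩⟩
    exact le_trans (Metric.infDist_nonneg) (le_ciSup hMbdd (Classical.arbitrary _))
  have hdM : ∀ i, Metric.infDist (φ i) (V : Set H) ≤ M := fun i => le_ciSup hMbdd i
  set A : ℝ := ∑ i, |α i| with hA
  have hAnn : 0 ≤ A := Finset.sum_nonneg fun i _ => abs_nonneg _
  -- key: infDist φ0 V ≤ A * M
  have hkey : Metric.infDist φ0 (V : Set H) ≤ A * M := by
    refine le_of_forall_pos_le_add fun ε hε => ?_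
    set δ : ℝ := ε / (A + 1) with hδ
    have hδpos : 0 < δ := by positivity
    have hex : ∀ i, ∃ v ∈ (V : Set H), dist (φ i) v <
        Metric.infDist (φ i) (V : Set H) + δ := by
      intro i
      exact (Metric.infDist_lt_iff hVne).1 (by linarith)
    choose v hvV hvd using hex
    have hvmem : (∑ i, α i • v i) ∈ (V : Set H) :=
      Submodule.sum_mem V fun i _ => V.smul_mem _ (hvV i)
    have h1 : Metric.infDist φ0 (V : Set H) ≤ dist φ0 (∑ i, α i • v i) :=
      Metric.infDist_le_dist_of_mem hvmem
    have h2 : dist φ0 (∑ i, α i • v i) ≤ ∑ i, |α i| * dist (φ i) (v i) := by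
      rw [dist_eq_norm, ← hα, ← Finset.sum_sub_distrib]
      refine le_trans (norm_sum_le _ _) (Finset.sum_le_sum fun i _ => ?_)
      rw [← smul_sub, norm_smul, Real.norm_eq_abs, dist_eq_norm]
    have h3 : ∑ i, |α i| * dist (φ i) (v i) ≤ ∑ i, |α i| * (M + δ) := by
      refine Finset.sum_le_sum fun i _ => mul_le_mul_of_nonneg_left ?_ (abs_nonneg _)
      exact le_trans (hvd i).le (by linarith [hdM i])
    have h4 : ∑ i, |α i| * (M + δ) = A * M + A * δ := by
      rw [← Finset.sum_mul]; ring
    have h5 : A * δ ≤ ε := by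
      have he : (A + 1) * δ = ε := by
        rw [hδ]; field_simp
      nlinarith [hδpos]
    linarith
  -- A ≤ sqrt (2n/θ)
  have hA2 : A ^ 2 ≤ 2 * n / θ := by
    have hcheb : A ^ 2 ≤ n * S := by
      have := sq_sum_le_card_mul_sum_sq (s := Finset.univ) (f := fun i => |α i|)
      simpa [hA, hS, sq_abs] using this
    have h6 : (n : ℝ) * S ≤ n / θ := by
      rw [div_eq_mul_inv, ← one_div]
      exact mul_le_mul_of_nonneg_left hSle (Nat.cast_nonneg n)
    have h7 : (n : ℝ) / θ ≤ 2 * n / θ := by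
      have hnn : (0:ℝ) ≤ n := Nat.cast_nonneg n
      gcongr
      linarith
    linarith
  have hAle : A ≤ Real.sqrt (2 * n / θ) := by
    rw [← Real.sqrt_sq hAnn]
    exact Real.sqrt_le_sqrt hA2
  calc Metric.infDist φ0 (V : Set H) ≤ A * M := hkey
    _ ≤ Real.sqrt (2 * n / θ) * M := mul_le_mul_of_nonneg_right hAle hMnn
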